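/- Let V be a finite-dimensional real vector space with skew-symmetric bilinear form Φ and subspaces A, B, C on which Φ vanishes identically, with Wall–Maslov index σ(V;A,B,C) defined as the signature of the induced symmetric form Ψ on W = (A ∩ (B+C))/(A∩B + A∩C). Then σ(V;A,B,C) is invariant under cyclic permutations of (A,B,C) and changes sign under transpositions: σ(V;A,B,C) = σ(V;B,C,A) = σ(V;C,A,B) = -σ(V;B,A,C) = -σ(V;A,C,B) = -σ(V;C,B,A). -/
import Mathlib


open LinearMap (BilinForm)

/-- The Wall space W = (A ∩ (B + C)) / (A ∩ B + A ∩ C). -/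
abbrev WallSpace {V : Type} [AddCommGroup V] [Module ℝ V] (A B C : Submodule ℝ V) :=
  ↥(A ⊓ (B ⊔ C)) ⧸ (Submodule.comap (A ⊓ (B ⊔ C)).subtype (A ⊓ B ⊔ A ⊓ C))

/-- For a' ∈ A ∩ (B + C), a chosen element b' ∈ B such that a' = -b' - c' with c' ∈ C. -/
noncomputable def wallB {V : Type} [AddCommGroup V] [Module ℝ V] (A B C : Submodule ℝ V)
    (a' : ↥(A ⊓ (B ⊔ C))) : V :=
  -(Submodule.mem_sup.mp (Submodule.mem_inf.mp a'.2).2).choose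

/-- Wall's induced pairing Ψ on the Wall space: Ψ([a],[a']) = Φ(a, b') where
a' = -b' - c' with b' ∈ B, c' ∈ C.  (Well-defined when Φ vanishes on A, B and C.) -/
noncomputable def wallForm {V : Type} [AddCommGroup V] [Module ℝ V] (Φ : BilinForm ℝ V)
    (A B C : Submodule ℝ V) : WallSpace A B C → WallSpace A B C → ℝ :=
  fun x y => Φ (x.out : V) (wallB A B C y.out)

/-- The dimension of a maximal positive definite subspace for a pairing. -/
noncomputable def posIndexFun (W : Type) [AddCommGroup W] [Module ℝ W]
    (f : W → W → ℝ) : ℕ :=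
  sSup {n | ∃ U : Submodule ℝ W, Module.finrank ℝ U = n ∧ ∀ v ∈ U, v ≠ 0 → 0 < f v v}

/-- The signature of a pairing. -/
noncomputable def signatureFun (W : Type) [AddCommGroup W] [Module ℝ W]
    (f : W → W → ℝ) : ℤ :=
  (posIndexFun W f : ℤ) - (posIndexFun W (fun x y => -(f x y)) : ℤ)

/-- Wall's Maslov triple index σ(V;A,B,C): the signature of the induced symmetric form Ψ
on W = (A ∩ (B + C)) / (A ∩ B + A ∩ C). -/
noncomputable def maslov {V : Type} [AddCommGroup V] [Module ℝ V] (Φ : BilinForm ℝ V)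
    (A B C : Submodule ℝ V) : ℤ :=
  signatureFun (WallSpace A B C) (wallForm Φ A B C)

namespace MP
variable {V : Type} [AddCommGroup V] [Module ℝ V]

noncomputable def wallC (A B C : Submodule ℝ V) (a : ↥(A ⊓ (B ⊔ C))) : V :=
  -(a : V) - wallB A B C a

lemma wallB_mem (A B C : Submodule ℝ V) (a : ↥(A ⊓ (B ⊔ C))) : wallB A B C a ∈ B :=
  B.neg_mem (Submodule.mem_sup.mp (Submodule.mem_inf.mp a.2).2).choose_spec.1

lemma wallC_mem (A B C : Submodule ℝ V) (a : ↥(A ⊓ (B ⊔ C))) : wallC A B C a ∈ C := by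
  obtain ⟨hyB, z, hz, hzsum⟩ := (Submodule.mem_sup.mp (Submodule.mem_inf.mp a.2).2).choose_spec
  have hz2 : z = (a : V) - (Submodule.mem_sup.mp (Submodule.mem_inf.mp a.2).2).choose :=
    eq_sub_of_add_eq (by rw [add_comm]; exact hzsum)
  have h : wallC A B C a = -z := by
    rw [hz2]; simp only [wallC, wallB]; abel
  rw [h]; exact C.neg_mem hz

lemma coe_eq (A B C : Submodule ℝ V) (a : ↥(A ⊓ (B ⊔ C))) :
    (a : V) = -(wallB A B C a) - wallC A B C a := by
  simp only [wallC]; abel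

lemma wallB_eq (A B C : Submodule ℝ V) (a : ↥(A ⊓ (B ⊔ C))) :
    wallB A B C a = -(a : V) - wallC A B C a := by
  simp only [wallC]; abel

end MP

namespace MP
variable {V : Type} [AddCommGroup V] [Module ℝ V] (Φ : BilinForm ℝ V)
variable {A B C : Submodule ℝ V}

lemma phi_right_zero (hB : ∀ x ∈ B, ∀ y ∈ B, Φ x y = 0) (hC : ∀ x ∈ C, ∀ y ∈ C, Φ x y = 0)
    (a : ↥(A ⊓ (B ⊔ C))) {d : V} (hdB : d ∈ B) (hdC : d ∈ C) : Φ a d = 0 := by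
  rw [coe_eq A B C a, map_sub, map_neg, LinearMap.sub_apply, LinearMap.neg_apply,
    hB _ (wallB_mem A B C a) _ hdB, hC _ (wallC_mem A B C a) _ hdC]
  ring

lemma phi_left_eq (hA : ∀ x ∈ A, ∀ y ∈ A, Φ x y = 0) (hB : ∀ x ∈ B, ∀ y ∈ B, Φ x y = 0)
    (hC : ∀ x ∈ C, ∀ y ∈ C, Φ x y = 0)
    {x y : ↥(A ⊓ (B ⊔ C))}
    (h : (Submodule.Quotient.mk x : WallSpace A B C) = Submodule.Quotient.mk y)
    (a' : ↥(A ⊓ (B ⊔ C))) : Φ x (wallB A B C a') = Φ y (wallB A B C a') := by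
  have hxy : ((x : V) - y) ∈ A ⊓ B ⊔ A ⊓ C := by
    have h2 := (Submodule.Quotient.eq _).mp h
    simpa using h2
  obtain ⟨m₁, hm₁, m₂, hm₂, hsum⟩ := Submodule.mem_sup.mp hxy
  have key : Φ ((x : V) - y) (wallB A B C a') = 0 := by
    rw [← hsum, map_add, LinearMap.add_apply,
      hB _ hm₁.2 _ (wallB_mem A B C a')]
    have h2 : Φ m₂ (wallB A B C a') = 0 := by
      rw [wallB_eq A B C a', map_sub, map_neg,
        hA _ hm₂.1 _ a'.2.1, hC _ hm₂.2 _ (wallC_mem A B C a')]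
      ring
    rw [h2]; ring
  have expand : Φ ((x : V) - y) (wallB A B C a')
      = Φ x (wallB A B C a') - Φ y (wallB A B C a') := by
    rw [map_sub, LinearMap.sub_apply]
  rw [expand] at key; linarith

lemma phi_right_eq (hA : ∀ x ∈ A, ∀ y ∈ A, Φ x y = 0) (hB : ∀ x ∈ B, ∀ y ∈ B, Φ x y = 0)
    (hC : ∀ x ∈ C, ∀ y ∈ C, Φ x y = 0)
    (a : ↥(A ⊓ (B ⊔ C))) {x y : ↥(A ⊓ (B ⊔ C))}
    (h : (Submodule.Quotient.mk x : WallSpace A B C) = Submodule.Quotient.mk y) :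
    Φ a (wallB A B C x) = Φ a (wallB A B C y) := by
  have hxy : ((x : V) - y) ∈ A ⊓ B ⊔ A ⊓ C := by
    have h2 := (Submodule.Quotient.eq _).mp h
    simpa using h2
  obtain ⟨m₁, hm₁, m₂, hm₂, hsum⟩ := Submodule.mem_sup.mp hxy
  have hδB : wallB A B C x - wallB A B C y ∈ B :=
    sub_mem (wallB_mem A B C x) (wallB_mem A B C y)
  have hδ2 : wallB A B C x - wallB A B C y + m₁ = -m₂ + (wallC A B C y - wallC A B C x) := by
    rw [wallB_eq A B C x, wallB_eq A B C y]
    have : m₁ = ((x : V) - y) - m₂ := by rw [← hsum]; abel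
    rw [this]; abel
  have key : Φ a (wallB A B C x - wallB A B C y) = 0 := by
    have hrw : wallB A B C x - wallB A B C y
        = (-m₁) + (wallB A B C x - wallB A B C y + m₁) := by abel
    rw [hrw, map_add, map_neg, hA _ a.2.1 _ hm₁.1]
    have h2 : Φ a (wallB A B C x - wallB A B C y + m₁) = 0 := by
      refine phi_right_zero Φ hB hC a (add_mem hδB hm₁.2) ?_
      rw [hδ2]
      exact add_mem (C.neg_mem hm₂.2) (sub_mem (wallC_mem A B C y) (wallC_mem A B C x))
    rw [h2]; ring
  rw [map_sub] at key; linarith [key]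

lemma wallForm_mk (hA : ∀ x ∈ A, ∀ y ∈ A, Φ x y = 0) (hB : ∀ x ∈ B, ∀ y ∈ B, Φ x y = 0)
    (hC : ∀ x ∈ C, ∀ y ∈ C, Φ x y = 0) (a a' : ↥(A ⊓ (B ⊔ C))) :
    wallForm Φ A B C (Submodule.Quotient.mk a) (Submodule.Quotient.mk a')
      = Φ a (wallB A B C a') := by
  have h1 : (Submodule.Quotient.mk (Quotient.out (Submodule.Quotient.mk a : WallSpace A B C))
      : WallSpace A B C) = Submodule.Quotient.mk a := Quotient.out_eq _
  have h2 : (Submodule.Quotient.mk (Quotient.out (Submodule.Quotient.mk a' : WallSpace A B C))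
      : WallSpace A B C) = Submodule.Quotient.mk a' := Quotient.out_eq _
  calc wallForm Φ A B C (Submodule.Quotient.mk a) (Submodule.Quotient.mk a')
      = Φ ((Submodule.Quotient.mk a : WallSpace A B C).out)
          (wallB A B C (Submodule.Quotient.mk a' : WallSpace A B C).out) := rfl
    _ = Φ a (wallB A B C (Submodule.Quotient.mk a' : WallSpace A B C).out) :=
        phi_left_eq Φ hA hB hC h1 _
    _ = Φ a (wallB A B C a') := phi_right_eq Φ hA hB hC a h2

lemma wallForm_zero (hA : ∀ x ∈ A, ∀ y ∈ A, Φ x y = 0) (hB : ∀ x ∈ B, ∀ y ∈ B, Φ x y = 0)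
    (hC : ∀ x ∈ C, ∀ y ∈ C, Φ x y = 0) : wallForm Φ A B C 0 0 = 0 := by
  rw [show (0 : WallSpace A B C) = Submodule.Quotient.mk 0 from (Submodule.Quotient.mk_zero _).symm,
    wallForm_mk Φ hA hB hC]
  simp

end MP

namespace MP

lemma posIndexFun_le {W₁ W₂ : Type} [AddCommGroup W₁] [Module ℝ W₁] [AddCommGroup W₂]
    [Module ℝ W₂] [FiniteDimensional ℝ W₁] [FiniteDimensional ℝ W₂]
    (f₁ : W₁ → W₁ → ℝ) (f₂ : W₂ → W₂ → ℝ) (e : W₁ →ₗ[ℝ] W₂)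
    (h0 : f₂ 0 0 = 0) (he : ∀ x, f₂ (e x) (e x) = f₁ x x) :
    posIndexFun W₁ f₁ ≤ posIndexFun W₂ f₂ := by
  apply csSup_le_csSup
  · refine ⟨Module.finrank ℝ W₂, ?_⟩
    rintro n ⟨U, hU, -⟩
    exact hU ▸ Submodule.finrank_le U
  · refine ⟨0, ⊥, finrank_bot ℝ W₁, ?_⟩
    intro v hv hv0
    exact absurd (by simpa using hv) hv0
  · rintro n ⟨U, hU, hpos⟩
    refine ⟨U.map e, ?_, ?_⟩
    · have hinj : Function.Injective (e.comp U.subtype) := by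
        rw [← LinearMap.ker_eq_bot]
        ext u
        simp only [LinearMap.mem_ker, LinearMap.comp_apply, Submodule.coe_subtype,
          Submodule.mem_bot]
        constructor
        · intro hu
          by_contra hne
          have hne' : (u : W₁) ≠ 0 := fun h => hne (by exact_mod_cast Subtype.ext h)
          have hp : 0 < f₁ u u := hpos u u.2 hne'
          rw [← he u, hu, h0] at hp
          exact lt_irrefl 0 hp
        · intro hu; rw [hu]; simp
      have hr : LinearMap.range (e.comp U.subtype) = U.map e := by
        rw [LinearMap.range_comp, Submodule.range_subtype]
      have := LinearMap.finrank_range_of_inj hinj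
      rw [hr] at this
      rw [this, hU]
    · rintro v hv hv0
      obtain ⟨u, hu, rfl⟩ := Submodule.mem_map.mp hv
      have hu0 : u ≠ 0 := fun h => hv0 (by rw [h, map_zero])
      rw [he u]
      exact hpos u hu hu0

lemma signatureFun_eq_of_maps {W₁ W₂ : Type} [AddCommGroup W₁] [Module ℝ W₁] [AddCommGroup W₂]
    [Module ℝ W₂] [FiniteDimensional ℝ W₁] [FiniteDimensional ℝ W₂]
    {f₁ : W₁ → W₁ → ℝ} {f₂ : W₂ → W₂ → ℝ} (e : W₁ →ₗ[ℝ] W₂) (g : W₂ →ₗ[ℝ] W₁)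
    (h01 : f₁ 0 0 = 0) (h02 : f₂ 0 0 = 0)
    (he : ∀ x, f₂ (e x) (e x) = f₁ x x) (hg : ∀ y, f₁ (g y) (g y) = f₂ y y) :
    signatureFun W₁ f₁ = signatureFun W₂ f₂ := by
  unfold signatureFun
  have p1 : posIndexFun W₁ f₁ = posIndexFun W₂ f₂ :=
    le_antisymm (posIndexFun_le f₁ f₂ e h02 he) (posIndexFun_le f₂ f₁ g h01 hg)
  have p2 : posIndexFun W₁ (fun x y => -(f₁ x y)) = posIndexFun W₂ (fun x y => -(f₂ x y)) :=
    le_antisymm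
      (posIndexFun_le _ _ e (by simp [h02]) (fun x => by rw [he x]))
      (posIndexFun_le _ _ g (by simp [h01]) (fun y => by rw [hg y]))
  rw [p1, p2]

lemma signatureFun_neg_of_maps {W₁ W₂ : Type} [AddCommGroup W₁] [Module ℝ W₁] [AddCommGroup W₂]
    [Module ℝ W₂] [FiniteDimensional ℝ W₁] [FiniteDimensional ℝ W₂]
    {f₁ : W₁ → W₁ → ℝ} {f₂ : W₂ → W₂ → ℝ} (e : W₁ →ₗ[ℝ] W₂) (g : W₂ →ₗ[ℝ] W₁)
    (h01 : f₁ 0 0 = 0) (h02 : f₂ 0 0 = 0)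
    (he : ∀ x, f₂ (e x) (e x) = -(f₁ x x)) (hg : ∀ y, f₁ (g y) (g y) = -(f₂ y y)) :
    signatureFun W₁ f₁ = -(signatureFun W₂ f₂) := by
  have p1 : posIndexFun W₁ f₁ = posIndexFun W₂ (fun x y => -(f₂ x y)) :=
    le_antisymm
      (posIndexFun_le f₁ _ e (by simp [h02]) (fun x => by rw [he x, neg_neg]))
      (posIndexFun_le _ f₁ g h01 (fun y => by rw [hg y]))
  have p2 : posIndexFun W₁ (fun x y => -(f₁ x y)) = posIndexFun W₂ f₂ :=
    le_antisymm
      (posIndexFun_le _ f₂ e h02 (fun x => by rw [he x]))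
      (posIndexFun_le f₂ _ g (by simp [h01]) (fun y => by rw [hg y, neg_neg]))
  unfold signatureFun
  rw [p1, p2]
  ring

end MP

namespace MP
variable {V : Type} [AddCommGroup V] [Module ℝ V]

lemma wallB_mem_cyc (A B C : Submodule ℝ V) (a : ↥(A ⊓ (B ⊔ C))) :
    wallB A B C a ∈ B ⊓ (C ⊔ A) := by
  refine ⟨wallB_mem A B C a, Submodule.mem_sup.mpr
    ⟨-(wallC A B C a), C.neg_mem (wallC_mem A B C a), -(a : V), A.neg_mem a.2.1, ?_⟩⟩
  simp only [wallC]; abel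

noncomputable def cycAux (A B C : Submodule ℝ V) :
    ↥(A ⊓ (B ⊔ C)) →ₗ[ℝ] WallSpace B C A where
  toFun a := Submodule.Quotient.mk ⟨wallB A B C a, wallB_mem_cyc A B C a⟩
  map_add' a a' := by
    rw [← Submodule.Quotient.mk_add, Submodule.Quotient.eq]
    simp only [Submodule.mem_comap, Submodule.coe_subtype, AddSubgroupClass.coe_sub,
      Submodule.coe_add]
    apply Submodule.mem_sup_left
    refine ⟨sub_mem (wallB_mem A B C (a + a'))
      (add_mem (wallB_mem A B C a) (wallB_mem A B C a')), ?_⟩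
    have hrw : wallB A B C (a + a') - (wallB A B C a + wallB A B C a')
        = wallC A B C a + wallC A B C a' - wallC A B C (a + a') := by
      rw [wallB_eq A B C (a + a'), wallB_eq A B C a, wallB_eq A B C a']
      simp only [Submodule.coe_add]
      abel
    rw [hrw]
    exact sub_mem (add_mem (wallC_mem A B C a) (wallC_mem A B C a')) (wallC_mem A B C (a + a'))
  map_smul' r a := by
    simp only [RingHom.id_apply]
    rw [← Submodule.Quotient.mk_smul, Submodule.Quotient.eq]
    simp only [Submodule.mem_comap, Submodule.coe_subtype, AddSubgroupClass.coe_sub,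
      SetLike.val_smul]
    apply Submodule.mem_sup_left
    refine ⟨sub_mem (wallB_mem A B C (r • a)) (Submodule.smul_mem _ r (wallB_mem A B C a)), ?_⟩
    have hrw : wallB A B C (r • a) - r • wallB A B C a
        = r • wallC A B C a - wallC A B C (r • a) := by
      rw [wallB_eq A B C (r • a), wallB_eq A B C a]
      simp only [SetLike.val_smul, smul_sub, smul_neg]
      abel
    rw [hrw]
    exact sub_mem (Submodule.smul_mem _ r (wallC_mem A B C a)) (wallC_mem A B C (r • a))

noncomputable def cycMap (A B C : Submodule ℝ V) :
    WallSpace A B C →ₗ[ℝ] WallSpace B C A :=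
  Submodule.liftQ _ (cycAux A B C) (by
    intro n hn
    rw [LinearMap.mem_ker]
    show (Submodule.Quotient.mk ⟨wallB A B C n, wallB_mem_cyc A B C n⟩ : WallSpace B C A) = 0
    rw [Submodule.Quotient.mk_eq_zero]
    rw [Submodule.mem_comap] at hn ⊢
    obtain ⟨n₁, hn₁, n₂, hn₂, hsum⟩ := Submodule.mem_sup.mp hn
    rw [Submodule.subtype_apply] at hsum
    apply Submodule.mem_sup.mpr
    refine ⟨wallB A B C n + n₁, ⟨add_mem (wallB_mem A B C n) hn₁.2, ?_⟩,
      -n₁, ⟨B.neg_mem hn₁.2, A.neg_mem hn₁.1⟩, by abel⟩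
    have hrw : wallB A B C n + n₁ = -n₂ - wallC A B C n := by
      rw [wallB_eq A B C n]
      have hm : n₁ = ((n : V)) - n₂ := by rw [← hsum]; abel
      rw [hm]; abel
    rw [hrw]
    exact sub_mem (C.neg_mem hn₂.2) (wallC_mem A B C n))

lemma cycMap_mk (A B C : Submodule ℝ V) (a : ↥(A ⊓ (B ⊔ C))) :
    cycMap A B C (Submodule.Quotient.mk a)
      = Submodule.Quotient.mk ⟨wallB A B C a, wallB_mem_cyc A B C a⟩ :=
  Submodule.liftQ_apply _ _ _

lemma swap_mem (A B C : Submodule ℝ V) (a : ↥(A ⊓ (B ⊔ C))) :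
    (a : V) ∈ A ⊓ (C ⊔ B) := ⟨a.2.1, by rw [sup_comm]; exact a.2.2⟩

noncomputable def swapAux (A B C : Submodule ℝ V) :
    ↥(A ⊓ (B ⊔ C)) →ₗ[ℝ] WallSpace A C B where
  toFun a := Submodule.Quotient.mk ⟨(a : V), swap_mem A B C a⟩
  map_add' a a' := by
    rw [← Submodule.Quotient.mk_add]
    congr 1
  map_smul' r a := by
    simp only [RingHom.id_apply]
    rw [← Submodule.Quotient.mk_smul]
    congr 1

noncomputable def swapMap (A B C : Submodule ℝ V) :
    WallSpace A B C →ₗ[ℝ] WallSpace A C B :=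
  Submodule.liftQ _ (swapAux A B C) (by
    intro n hn
    rw [LinearMap.mem_ker]
    show (Submodule.Quotient.mk ⟨(n : V), swap_mem A B C n⟩ : WallSpace A C B) = 0
    rw [Submodule.Quotient.mk_eq_zero]
    rw [Submodule.mem_comap] at hn ⊢
    rw [sup_comm]
    exact hn)

lemma swapMap_mk (A B C : Submodule ℝ V) (a : ↥(A ⊓ (B ⊔ C))) :
    swapMap A B C (Submodule.Quotient.mk a)
      = Submodule.Quotient.mk ⟨(a : V), swap_mem A B C a⟩ :=
  Submodule.liftQ_apply _ _ _

end MP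

namespace MP
variable {V : Type} [AddCommGroup V] [Module ℝ V] (Φ : BilinForm ℝ V)

lemma cyc_diag (hskew : ∀ x y, Φ x y = -(Φ y x)) {A B C : Submodule ℝ V}
    (hA : ∀ x ∈ A, ∀ y ∈ A, Φ x y = 0) (hB : ∀ x ∈ B, ∀ y ∈ B, Φ x y = 0)
    (hC : ∀ x ∈ C, ∀ y ∈ C, Φ x y = 0) (x : WallSpace A B C) :
    wallForm Φ B C A (cycMap A B C x) (cycMap A B C x) = wallForm Φ A B C x x := by
  obtain ⟨a, rfl⟩ := Submodule.Quotient.mk_surjective _ x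
  rw [cycMap_mk, wallForm_mk Φ hB hC hA, wallForm_mk Φ hA hB hC]
  set bh : ↥(B ⊓ (C ⊔ A)) := ⟨wallB A B C a, wallB_mem_cyc A B C a⟩ with hbh
  set b : V := wallB A B C a with hbdef
  set c : V := wallC A B C a with hcdef
  set c₂ : V := wallB B C A bh with hc2def
  set a₂ : V := wallC B C A bh with ha2def
  have hbB : b ∈ B := wallB_mem A B C a
  have hcC : c ∈ C := wallC_mem A B C a
  have hc₂C : c₂ ∈ C := wallB_mem B C A bh
  have ha₂A : a₂ ∈ A := wallC_mem B C A bh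
  have ha : (a : V) = -b - c := coe_eq A B C a
  have hb : b = -c₂ - a₂ := coe_eq B C A bh
  -- goal : Φ b c₂ = Φ ↑a b
  show Φ b c₂ = Φ (a : V) b
  have hc₂ : c₂ = -b - a₂ := by rw [hb]; abel
  have s1 : Φ b c₂ = -(Φ b b) - Φ b a₂ := by
    rw [hc₂, map_sub, map_neg]
  have s2 : Φ b b = 0 := hB b hbB b hbB
  have s3 : Φ b a₂ = -(Φ a₂ b) := hskew b a₂
  have s4 : Φ ((a : V) - a₂) b = Φ (a : V) b - Φ a₂ b := by
    rw [map_sub, LinearMap.sub_apply]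
  have haa₂ : (a : V) - a₂ = c₂ - c := by rw [ha, hb]; abel
  have hbac : b = -(a : V) - c := by rw [ha]; abel
  have s5 : Φ ((a : V) - a₂) b = -(Φ ((a : V) - a₂) (a : V)) - Φ ((a : V) - a₂) c := by
    conv_lhs => rw [hbac]
    rw [map_sub, map_neg]
  have s6 : Φ ((a : V) - a₂) (a : V) = 0 := hA _ (sub_mem a.2.1 ha₂A) _ a.2.1
  have s7 : Φ ((a : V) - a₂) c = 0 := by
    rw [haa₂]; exact hC _ (sub_mem hc₂C hcC) _ hcC
  linarith [s1, s2, s3, s4, s5, s6, s7]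

lemma swap_diag {A B C : Submodule ℝ V}
    (hA : ∀ x ∈ A, ∀ y ∈ A, Φ x y = 0) (hB : ∀ x ∈ B, ∀ y ∈ B, Φ x y = 0)
    (hC : ∀ x ∈ C, ∀ y ∈ C, Φ x y = 0) (x : WallSpace A B C) :
    wallForm Φ A C B (swapMap A B C x) (swapMap A B C x) = -(wallForm Φ A B C x x) := by
  obtain ⟨a, rfl⟩ := Submodule.Quotient.mk_surjective _ x
  rw [swapMap_mk, wallForm_mk Φ hA hC hB, wallForm_mk Φ hA hB hC]
  set ah : ↥(A ⊓ (C ⊔ B)) := ⟨(a : V), swap_mem A B C a⟩ with hah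
  set b : V := wallB A B C a with hbdef
  set c : V := wallC A B C a with hcdef
  set c' : V := wallB A C B ah with hc'def
  set b₂ : V := wallC A C B ah with hb2def
  have hbB : b ∈ B := wallB_mem A B C a
  have hcC : c ∈ C := wallC_mem A B C a
  have hc'C : c' ∈ C := wallB_mem A C B ah
  have hb₂B : b₂ ∈ B := wallC_mem A C B ah
  have ha : (a : V) = -b - c := coe_eq A B C a
  have ha' : (a : V) = -c' - b₂ := coe_eq A C B ah
  show Φ (a : V) c' = -(Φ (a : V) b)
  have q1 : Φ (a : V) c' = -(Φ (a : V) (a : V)) - Φ (a : V) b₂ := by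
    rw [show c' = -(a : V) - b₂ from by rw [ha']; abel, map_sub, map_neg]
  have q2 : Φ (a : V) (a : V) = 0 := hA _ a.2.1 _ a.2.1
  have q3 : Φ (a : V) b₂ = -(Φ b b₂) - Φ c b₂ := by
    conv_lhs => rw [ha]
    rw [map_sub, map_neg, LinearMap.sub_apply, LinearMap.neg_apply]
  have q4 : Φ b b₂ = 0 := hB _ hbB _ hb₂B
  have q5 : Φ c b₂ = -(Φ c (a : V)) - Φ c c' := by
    rw [show b₂ = -(a : V) - c' from by rw [ha']; abel, map_sub, map_neg]
  have q6 : Φ c c' = 0 := hC _ hcC _ hc'C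
  have q7 : Φ (a : V) b = -(Φ c' b) - Φ b₂ b := by
    conv_lhs => rw [ha']
    rw [map_sub, map_neg, LinearMap.sub_apply, LinearMap.neg_apply]
  have q8 : Φ b₂ b = 0 := hB _ hb₂B _ hbB
  have q9 : Φ c' b = -(Φ c' (a : V)) - Φ c' c := by
    rw [show b = -(a : V) - c from by rw [ha]; abel, map_sub, map_neg]
  have q10 : Φ c' c = 0 := hC _ hc'C _ hcC
  have q11 : Φ c' (a : V) = Φ c (a : V) := by
    have hcc : c' - c ∈ B := by
      rw [show c' - c = b - b₂ from by rw [show c' = -(a:V) - b₂ from by rw [ha']; abel,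
        show c = -(a:V) - b from by rw [ha]; abel]; abel]
      exact sub_mem hbB hb₂B
    have key : Φ (c' - c) (a : V) = 0 := by
      rw [show (a : V) = -b - c from ha, map_sub, map_neg,
        hB _ hcc _ hbB, hC _ (sub_mem hc'C hcC) _ hcC]
      ring
    rw [map_sub, LinearMap.sub_apply] at key
    linarith
  linarith [q1, q2, q3, q4, q5, q6, q7, q8, q9, q10, q11]

end MP

namespace MP
variable {V : Type} [AddCommGroup V] [Module ℝ V] [FiniteDimensional ℝ V] (Φ : BilinForm ℝ V)

lemma posIndex_cyc_le (hskew : ∀ x y, Φ x y = -(Φ y x)) (A B C : Submodule ℝ V)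
    (hA : ∀ x ∈ A, ∀ y ∈ A, Φ x y = 0) (hB : ∀ x ∈ B, ∀ y ∈ B, Φ x y = 0)
    (hC : ∀ x ∈ C, ∀ y ∈ C, Φ x y = 0) :
    posIndexFun (WallSpace A B C) (wallForm Φ A B C)
      ≤ posIndexFun (WallSpace B C A) (wallForm Φ B C A) :=
  posIndexFun_le _ _ (cycMap A B C) (wallForm_zero Φ hB hC hA) (cyc_diag Φ hskew hA hB hC)

lemma posIndex_cyc_le_neg (hskew : ∀ x y, Φ x y = -(Φ y x)) (A B C : Submodule ℝ V)
    (hA : ∀ x ∈ A, ∀ y ∈ A, Φ x y = 0) (hB : ∀ x ∈ B, ∀ y ∈ B, Φ x y = 0)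
    (hC : ∀ x ∈ C, ∀ y ∈ C, Φ x y = 0) :
    posIndexFun (WallSpace A B C) (fun x y => -(wallForm Φ A B C x y))
      ≤ posIndexFun (WallSpace B C A) (fun x y => -(wallForm Φ B C A x y)) :=
  posIndexFun_le _ _ (cycMap A B C) (by rw [wallForm_zero Φ hB hC hA]; ring)
    (fun x => by rw [cyc_diag Φ hskew hA hB hC x])

lemma maslov_cyc (hskew : ∀ x y, Φ x y = -(Φ y x)) (A B C : Submodule ℝ V)
    (hA : ∀ x ∈ A, ∀ y ∈ A, Φ x y = 0) (hB : ∀ x ∈ B, ∀ y ∈ B, Φ x y = 0)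
    (hC : ∀ x ∈ C, ∀ y ∈ C, Φ x y = 0) :
    maslov Φ A B C = maslov Φ B C A := by
  unfold maslov signatureFun
  have e1 : posIndexFun (WallSpace A B C) (wallForm Φ A B C)
      = posIndexFun (WallSpace B C A) (wallForm Φ B C A) :=
    le_antisymm (posIndex_cyc_le Φ hskew A B C hA hB hC)
      ((posIndex_cyc_le Φ hskew B C A hB hC hA).trans (posIndex_cyc_le Φ hskew C A B hC hA hB))
  have e2 : posIndexFun (WallSpace A B C) (fun x y => -(wallForm Φ A B C x y))
      = posIndexFun (WallSpace B C A) (fun x y => -(wallForm Φ B C A x y)) :=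
    le_antisymm (posIndex_cyc_le_neg Φ hskew A B C hA hB hC)
      ((posIndex_cyc_le_neg Φ hskew B C A hB hC hA).trans
        (posIndex_cyc_le_neg Φ hskew C A B hC hA hB))
  rw [e1, e2]

lemma maslov_swap (A B C : Submodule ℝ V)
    (hA : ∀ x ∈ A, ∀ y ∈ A, Φ x y = 0) (hB : ∀ x ∈ B, ∀ y ∈ B, Φ x y = 0)
    (hC : ∀ x ∈ C, ∀ y ∈ C, Φ x y = 0) :
    maslov Φ A B C = -(maslov Φ A C B) := by
  unfold maslov
  exact signatureFun_neg_of_maps (swapMap A B C) (swapMap A C B)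
    (wallForm_zero Φ hA hB hC) (wallForm_zero Φ hA hC hB)
    (swap_diag Φ hA hB hC) (swap_diag Φ hA hC hB)

end MP

/-- The Wall–Maslov triple index is invariant under cyclic permutations of
(A,B,C) and changes sign under transpositions. -/
theorem maslov_permutations {V : Type} [AddCommGroup V] [Module ℝ V] [FiniteDimensional ℝ V]
    (Φ : BilinForm ℝ V)
    (hskew : ∀ x y, Φ x y = -(Φ y x))
    (A B C : Submodule ℝ V)
    (hA : ∀ x ∈ A, ∀ y ∈ A, Φ x y = 0)
    (hB : ∀ x ∈ B, ∀ y ∈ B, Φ x y = 0)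
    (hC : ∀ x ∈ C, ∀ y ∈ C, Φ x y = 0) :
    maslov Φ A B C = maslov Φ B C A ∧
    maslov Φ A B C = maslov Φ C A B ∧
    maslov Φ A B C = -maslov Φ B A C ∧
    maslov Φ A B C = -maslov Φ A C B ∧
    maslov Φ A B C = -maslov Φ C B A := by
  have cycABC := MP.maslov_cyc Φ hskew A B C hA hB hC
  have cycBCA := MP.maslov_cyc Φ hskew B C A hB hC hA
  have cycBAC := MP.maslov_cyc Φ hskew B A C hB hA hC
  have cycCBA := MP.maslov_cyc Φ hskew C B A hC hB hA
  have swapA := MP.maslov_swap Φ A B C hA hB hC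
  refine ⟨cycABC, cycABC.trans cycBCA, ?_, swapA, ?_⟩
  · rw [cycBAC, ← swapA]
  · rw [cycCBA, cycBAC, ← swapA]
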